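/- arXiv:1511.02942 — 8 statements merged into one kernel-verified Lean document; each statement's English description precedes it below -/
import Mathlib

section
/- Suppose for some α > 0 there exist z*, y*, x* ∈ ℝ^{n×p} with A z* = z*, 1_n^T y* = 0, y* + α ∇f(x*) = 0, and x* = D^{-1} z*. Then x* is consensual and its common row is a global minimizer of f(x) = Σ_{i=1}^n f_i(x) over ℝ^p. -/
open Matrix Filter Topology

open scoped RealInnerProductSpace in
/-- First-order sufficient condition: a convex differentiable function lies above
its tangent plane. -/
lemma convexOn_grad_ineq {E : Type*} [NormedAddCommGroup E] [InnerProductSpace ℝ E] [CompleteSpace E]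
    {f : E → ℝ} {g x : E} (hc : ConvexOn ℝ Set.univ f) (hg : HasGradientAt f g x)
    (y : E) : f x + ⟪g, y - x⟫ ≤ f y := by
  set v := y - x with hv
  have hline : HasDerivAt (fun t : ℝ => f (x + t • v)) ⟪g, v⟫ 0 := by
    have h1 : HasDerivAt (fun t : ℝ => x + t • v) v 0 := by
      simpa using ((hasDerivAt_id (0:ℝ)).smul_const v).const_add x
    have h2' : HasFDerivAt f ((InnerProductSpace.toDual ℝ E) g) (x + (0:ℝ) • v) := by
      simpa using hg.hasFDerivAt
    have h3 := h2'.comp_hasDerivAt 0 h1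
    simp only [InnerProductSpace.toDual_apply_apply] at h3
    exact h3
  have hslope : Tendsto (slope (fun t : ℝ => f (x + t • v)) 0) (𝓝[>] (0:ℝ))
      (𝓝 ⟪g, v⟫) :=
    (hasDerivAt_iff_tendsto_slope.mp hline).mono_left
      (nhdsWithin_mono _ (fun t ht => ne_of_gt ht))
  have hbound : ∀ᶠ t in 𝓝[>] (0:ℝ),
      slope (fun t : ℝ => f (x + t • v)) 0 t ≤ f y - f x := by
    filter_upwards [Ioc_mem_nhdsGT_of_mem (by norm_num : (0:ℝ) ∈ Set.Ico 0 1)]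
      with t ht
    obtain ⟨ht0, ht1⟩ := ht
    have hconv := hc.2 (Set.mem_univ x) (Set.mem_univ y)
      (show (0:ℝ) ≤ 1 - t by linarith) (le_of_lt ht0) (by ring)
    have hpt : x + t • v = (1 - t) • x + t • y := by
      simp [hv, smul_sub, sub_smul]; abel
    have : f (x + t • v) ≤ (1 - t) * f x + t * f y := by
      rw [hpt]; simpa using hconv
    rw [slope_def_field]
    simp only [zero_smul, add_zero, sub_zero]
    rw [div_le_iff₀ ht0]
    nlinarith
  have hle : ⟪g, v⟫ ≤ f y - f x := le_of_tendsto hslope hbound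
  linarith

/-- The rows of the gradient matrix `∇f(x)` are the gradients `∇fᵢ(x₍ᵢ₎)`. -/
noncomputable def gradMat {n p : ℕ}
    (g : Fin n → EuclideanSpace ℝ (Fin p) → EuclideanSpace ℝ (Fin p))
    (x : Matrix (Fin n) (Fin p) ℝ) : Matrix (Fin n) (Fin p) ℝ :=
  Matrix.of fun i j => g i ((WithLp.equiv 2 (Fin p → ℝ)).symm (x i)) j

/-- if for some `α > 0` there exist `z*, y*, x*` with `A z* = z*`,
`1ₙᵀ y* = 0`, `y* + α ∇f(x*) = 0` and `x* = D⁻¹ z*`, then `x*` is consensual and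
its common row is a global minimizer of `Σᵢ fᵢ`. -/
theorem extraPush_first_order_optimality_sufficient
    {n p : ℕ} (hn : 1 ≤ n) (hp : 1 ≤ p)
    (A : Matrix (Fin n) (Fin n) ℝ)
    (hA0 : ∀ i j, 0 ≤ A i j) (hA1 : ∀ j, ∑ i, A i j = 1)
    (φ : Fin n → ℝ) (hφpos : ∀ i, 0 < φ i) (hφ1 : ∑ i, φ i = 1)
    (hconv : ∀ i j, Tendsto (fun t : ℕ => (A ^ t) i j) atTop (𝓝 (φ i)))
    (D : Matrix (Fin n) (Fin n) ℝ) (hD : D = (n : ℝ) • Matrix.diagonal φ)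
    (f : Fin n → EuclideanSpace ℝ (Fin p) → ℝ)
    (g : Fin n → EuclideanSpace ℝ (Fin p) → EuclideanSpace ℝ (Fin p))
    (hconvex : ∀ i, ConvexOn ℝ Set.univ (f i))
    (hgrad : ∀ i y, HasGradientAt (f i) (g i y) y)
    (α : ℝ) (hα : 0 < α)
    (zs ys xs : Matrix (Fin n) (Fin p) ℝ)
    (hz : A * zs = zs)
    (hy : ∀ j, ∑ i, ys i j = 0)
    (hopt : ys + α • gradMat g xs = 0)
    (hx : xs = D⁻¹ * zs) :
    ∃ xbar : EuclideanSpace ℝ (Fin p),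
      (∀ i j, xs i j = xbar j) ∧ ∀ y, ∑ i, f i xbar ≤ ∑ i, f i y := by
  have hn0 : (n : ℝ) ≠ 0 := Nat.cast_ne_zero.mpr (by omega)
  -- z is proportional to φ
  have hzt : ∀ t : ℕ, A ^ t * zs = zs := by
    intro t
    induction t with
    | zero => simp
    | succ t ih => rw [pow_succ, Matrix.mul_assoc, hz, ih]
  set S : Fin p → ℝ := fun j => ∑ k, zs k j with hS
  have hzφ : ∀ i j, zs i j = φ i * S j := by
    intro i j
    have h1 : Tendsto (fun t : ℕ => (A ^ t * zs) i j) atTop (𝓝 (φ i * S j)) := by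
      have : ∀ t : ℕ, (A ^ t * zs) i j = ∑ k, (A ^ t) i k * zs k j := fun t =>
        Matrix.mul_apply
      simp only [this]
      have := tendsto_finset_sum Finset.univ
        (fun k _ => (hconv i k).mul_const (zs k j))
      simpa [hS, Finset.mul_sum] using this
    have h2 : Tendsto (fun _ : ℕ => zs i j) atTop (𝓝 (zs i j)) := tendsto_const_nhds
    have := tendsto_nhds_unique (by simpa [hzt] using h1) h2
    exact this.symm
  -- inverse of D
  set E : Matrix (Fin n) (Fin n) ℝ := Matrix.diagonal fun i => ((n : ℝ) * φ i)⁻¹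
    with hE
  have hDinv : D⁻¹ = E := by
    apply Matrix.inv_eq_right_inv
    rw [hD, hE, Matrix.smul_mul, Matrix.diagonal_mul_diagonal]
    ext i k
    rcases eq_or_ne i k with rfl | h
    · simp only [Matrix.smul_apply, Matrix.diagonal_apply_eq, Matrix.one_apply_eq,
        smul_eq_mul]
      have hne : (n:ℝ) * φ i ≠ 0 := mul_ne_zero hn0 (ne_of_gt (hφpos i))
      field_simp
      exact div_self (ne_of_gt (hφpos i))
    · simp [Matrix.diagonal_apply_ne _ h, h]
  set xbar : EuclideanSpace ℝ (Fin p) :=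
    (WithLp.equiv 2 (Fin p → ℝ)).symm (fun j => S j / n) with hxbar
  have hxbarj : ∀ j, xbar j = S j / n := fun j => rfl
  have hcons : ∀ i j, xs i j = xbar j := by
    intro i j
    rw [hx, hDinv, hE, hxbarj]
    rw [Matrix.diagonal_mul]
    rw [hzφ i j]
    have hφ0 : φ i ≠ 0 := ne_of_gt (hφpos i)
    field_simp
  refine ⟨xbar, hcons, ?_⟩
  -- rows of xs coincide with xbar as EuclideanSpace element
  have hrow : ∀ i, (WithLp.equiv 2 (Fin p → ℝ)).symm (xs i) = xbar := by
    intro i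
    have : xs i = WithLp.equiv 2 (Fin p → ℝ) xbar := by
      funext j; exact hcons i j
    rw [this, Equiv.symm_apply_apply]
  -- sum of gradients vanishes
  have hgsum : ∀ j, ∑ i, g i xbar j = 0 := by
    intro j
    have h0 : ∀ i, ys i j + α * g i xbar j = 0 := by
      intro i
      have := congrFun (congrFun hopt i) j
      have hr : WithLp.toLp 2 (xs i) = xbar := hrow i
      simpa [gradMat, hr] using this
    have : ∑ i, (ys i j + α * g i xbar j) = 0 := by
      simp [h0]
    rw [Finset.sum_add_distrib, hy j, ← Finset.mul_sum] at this
    have := (by linarith : α * ∑ i, g i xbar j = 0)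
    exact (mul_eq_zero.mp this).resolve_left (ne_of_gt hα)
  -- first-order optimality
  intro y
  have key : ∀ i, f i xbar + inner ℝ (g i xbar) (y - xbar) ≤ f i y := fun i =>
    convexOn_grad_ineq (hconvex i) (hgrad i xbar) y
  have hsum := Finset.sum_le_sum fun i (_ : i ∈ Finset.univ) => key i
  rw [Finset.sum_add_distrib] at hsum
  have hinner : ∑ i, (inner ℝ (g i xbar) (y - xbar) : ℝ) = 0 := by
    have : ∀ i, (inner ℝ (g i xbar) (y - xbar) : ℝ)
        = ∑ j, g i xbar j * (y - xbar) j := by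
      intro i
      simp [PiLp.inner_apply, RCLike.inner_apply, mul_comm]
    simp only [this]
    rw [Finset.sum_comm]
    simp [← Finset.sum_mul, hgsum]
  linarith [hsum, hinner]
end

section
/- Let A ∈ ℝ^{n×n}, Ā := (I_n + A)/2, and let z^t, g^t ∈ ℝ^{n×p} (t = 0, 1, 2, …) be sequences satisfying z^1 = A z^0 − g^0 and z^t = (A + I_n) z^{t−1} − Ā z^{t−2} − (g^{t−1} − g^{t−2}) for all t ≥ 2. Define y^t := Σ_{k=0}^t (Ā − A) z^k. Then for every t ≥ 0, Ā z^{t+1} = Ā z^t − g^t − y^{t+1}. -/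
open Matrix Filter Topology

/-- the two-step recursion `z^t = (A + I) z^{t−1} − Ā z^{t−2} −
(g^{t−1} − g^{t−2})` (with `z^1 = A z^0 − g^0`) can be rewritten, with
`y^t := Σ_{k=0}^t (Ā − A) z^k`, as `Ā z^{t+1} = Ā z^t − g^t − y^{t+1}`. -/
theorem extraPush_running_sum_reformulation
    {n p : ℕ} (hn : 1 ≤ n) (hp : 1 ≤ p)
    (A : Matrix (Fin n) (Fin n) ℝ)
    (Abar : Matrix (Fin n) (Fin n) ℝ) (hAbar : Abar = (2⁻¹ : ℝ) • (1 + A))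
    (z g : ℕ → Matrix (Fin n) (Fin p) ℝ)
    (h1 : z 1 = A * z 0 - g 0)
    (hrec : ∀ t, z (t + 2) = (A + 1) * z (t + 1) - Abar * z t - (g (t + 1) - g t))
    (y : ℕ → Matrix (Fin n) (Fin p) ℝ)
    (hy : ∀ t, y t = ∑ k ∈ Finset.range (t + 1), (Abar - A) * z k) :
    ∀ t, Abar * z (t + 1) = Abar * z t - g t - y (t + 1) := by
  have hone : Abar + (Abar - A) = 1 := by rw [hAbar]; module
  have key : ∀ X : Matrix (Fin n) (Fin p) ℝ, Abar * X + (Abar - A) * X = X := by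
    intro X; rw [← Matrix.add_mul, hone, Matrix.one_mul]
  have h2 : (A + 1 : Matrix (Fin n) (Fin n) ℝ) = Abar + Abar := by rw [hAbar]; module
  intro t
  induction t with
  | zero =>
      have e0 : (Abar - A) * z 0 = Abar * z 0 - A * z 0 := Matrix.sub_mul _ _ _
      have e1 : (Abar - A) * z 1 = z 1 - Abar * z 1 := eq_sub_of_add_eq' (key _)
      rw [hy 1, Finset.sum_range_succ, Finset.sum_range_one, e0, e1, h1]
      abel
  | succ t ih =>
      have hy2 : y (t + 2) = y (t + 1) + (Abar - A) * z (t + 2) := by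
        rw [hy, hy, Finset.sum_range_succ]
      have e2 : (Abar - A) * z (t + 2) = z (t + 2) - Abar * z (t + 2) :=
        eq_sub_of_add_eq' (key _)
      have hyIH : y (t + 1) = Abar * z t - g t - Abar * z (t + 1) := by rw [ih]; abel
      rw [hy2, e2, hyIH, hrec t, h2, Matrix.add_mul]
      abel
end

section
/- Consider the ExtraPush iteration: w^0 = 1_n, w^t = A w^{t−1} for t ≥ 1; x^t = diag(w^t)^{-1} z^t for all t ≥ 0; z^1 = A z^0 − α ∇f(x^0); and z^t = (A + I_n) z^{t−1} − Ā z^{t−2} − α(∇f(x^{t−1}) − ∇f(x^{t−2})) for t ≥ 2, where α > 0 and z^0 ∈ ℝ^{n×p} is arbitrary. Define y^t := Σ_{k=0}^t (Ā − A) z^k. Suppose there exist z*, y* ∈ ℝ^{n×p} and a strictly increasing sequence of indices (t_j) such that z^{t_j} → z*, z^{t_j+1} → z*, y^{t_j} → y*, and y^{t_j+1} → y* as j → ∞. Then, setting x* := D^{-1} z*, the triple (z*, y*, x*) satisfies the first-order optimality conditions: A z* = z*, 1_n^T y* = 0, y* + α ∇f(x*) = 0, and x* = D^{-1} z*. -/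
open Matrix Filter Topology

/-- any limit point `(z*, y*)` (along a subsequence, together with its
shift by one) of the ExtraPush iteration satisfies, with `x* := D⁻¹ z*`, the
first-order optimality conditions `A z* = z*`, `1ₙᵀ y* = 0`, `y* + α ∇f(x*) = 0`,
`x* = D⁻¹ z*`. -/
theorem extraPush_limit_point_optimality
    {n p : ℕ} (hn : 1 ≤ n) (hp : 1 ≤ p)
    (A : Matrix (Fin n) (Fin n) ℝ)
    (hA0 : ∀ i j, 0 ≤ A i j) (hA1 : ∀ j, ∑ i, A i j = 1)
    (hAdiag : ∀ j, 0 < A j j)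
    (Abar : Matrix (Fin n) (Fin n) ℝ) (hAbar : Abar = (2⁻¹ : ℝ) • (1 + A))
    (φ : Fin n → ℝ) (hφpos : ∀ i, 0 < φ i) (hφ1 : ∑ i, φ i = 1)
    (hconv : ∀ i j, Tendsto (fun t : ℕ => (A ^ t) i j) atTop (𝓝 (φ i)))
    (D : Matrix (Fin n) (Fin n) ℝ) (hD : D = (n : ℝ) • Matrix.diagonal φ)
    (f : Fin n → EuclideanSpace ℝ (Fin p) → ℝ)
    (g : Fin n → EuclideanSpace ℝ (Fin p) → EuclideanSpace ℝ (Fin p))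
    (hconvex : ∀ i, ConvexOn ℝ Set.univ (f i))
    (hgrad : ∀ i y, HasGradientAt (f i) (g i y) y)
    (hgcont : ∀ i, Continuous (g i))
    (α : ℝ) (hα : 0 < α)
    (w : ℕ → Fin n → ℝ)
    (hw0 : w 0 = fun _ => 1) (hw : ∀ t, w (t + 1) = A *ᵥ w t)
    (z x : ℕ → Matrix (Fin n) (Fin p) ℝ)
    (hx : ∀ t, x t = (Matrix.diagonal (w t))⁻¹ * z t)
    (hz1 : z 1 = A * z 0 - α • gradMat g (x 0))
    (hrec : ∀ t, z (t + 2) =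
      (A + 1) * z (t + 1) - Abar * z t - α • (gradMat g (x (t + 1)) - gradMat g (x t)))
    (y : ℕ → Matrix (Fin n) (Fin p) ℝ)
    (hy : ∀ t, y t = ∑ k ∈ Finset.range (t + 1), (Abar - A) * z k)
    (zs ys : Matrix (Fin n) (Fin p) ℝ)
    (tj : ℕ → ℕ) (htj : StrictMono tj)
    (hzlim : ∀ i j, Tendsto (fun k => z (tj k) i j) atTop (𝓝 (zs i j)))
    (hzlim1 : ∀ i j, Tendsto (fun k => z (tj k + 1) i j) atTop (𝓝 (zs i j)))
    (hylim : ∀ i j, Tendsto (fun k => y (tj k) i j) atTop (𝓝 (ys i j)))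
    (hylim1 : ∀ i j, Tendsto (fun k => y (tj k + 1) i j) atTop (𝓝 (ys i j))) :
    A * zs = zs ∧
    (∀ j, ∑ i, ys i j = 0) ∧
    ys + α • gradMat g (D⁻¹ * zs) = 0 ∧
    D⁻¹ * zs = D⁻¹ * zs := by
  have hn0 : (0:ℝ) < (n:ℝ) := by exact_mod_cast hn
  have hnφ : ∀ i, ((n:ℝ) * φ i) ≠ 0 := fun i => (mul_pos hn0 (hφpos i)).ne'
  -- Abar * M formula
  have hAbarM : ∀ (M : Matrix (Fin n) (Fin p) ℝ),
      Abar * M = (2⁻¹ : ℝ) • (M + A * M) := by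
    intro M
    rw [hAbar, Matrix.smul_mul, Matrix.add_mul, Matrix.one_mul]
  -- positivity of w
  have hwpos : ∀ t i, 0 < w t i := by
    intro t
    induction t with
    | zero => intro i; rw [hw0]; norm_num
    | succ t ih =>
      intro i
      rw [hw t]
      have : (A *ᵥ w t) i = ∑ j, A i j * w t j := rfl
      rw [this]
      exact Finset.sum_pos' (fun j _ => mul_nonneg (hA0 i j) (ih j).le)
        ⟨i, Finset.mem_univ i, mul_pos (hAdiag i) (ih i)⟩
  -- w t i = ∑ j, (A^t) i j
  have hAt : ∀ t i, w t i = ∑ j, (A ^ t) i j := by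
    intro t
    induction t with
    | zero => intro i; simp [hw0, Matrix.one_apply]
    | succ t ih =>
      intro i
      rw [hw t]
      have h1 : (A *ᵥ w t) i = ∑ j, A i j * w t j := rfl
      rw [h1]
      have h2 : ∀ j, A i j * w t j = ∑ l, A i j * (A ^ t) j l := by
        intro j; rw [ih j, Finset.mul_sum]
      simp only [h2]
      rw [Finset.sum_comm]
      refine Finset.sum_congr rfl fun l _ => ?_
      rw [pow_succ', Matrix.mul_apply]
  -- limit of w
  have hwlim : ∀ i, Tendsto (fun t => w t i) atTop (𝓝 ((n:ℝ) * φ i)) := by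
    intro i
    have h := tendsto_finset_sum (Finset.univ : Finset (Fin n)) (fun j _ => hconv i j)
    have hs : ∑ _j : Fin n, φ i = (n:ℝ) * φ i := by
      rw [Finset.sum_const, Finset.card_univ, Fintype.card_fin, nsmul_eq_mul]
    rw [hs] at h
    simpa only [hAt] using h
  -- entrywise formula for x
  have hxe : ∀ t i j, x t i j = (w t i)⁻¹ * z t i j := by
    intro t i j
    have hf : (fun i => (w t i)⁻¹ * w t i) = fun _ => (1:ℝ) :=
      funext fun i => inv_mul_cancel₀ (hwpos t i).ne'
    have hinv : (Matrix.diagonal (w t))⁻¹ = Matrix.diagonal (fun i => (w t i)⁻¹) :=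
      Matrix.inv_eq_left_inv
        (by rw [Matrix.diagonal_mul_diagonal, hf, Matrix.diagonal_one])
    rw [hx, hinv, Matrix.diagonal_mul]
  -- D⁻¹
  have hDdiag : D = Matrix.diagonal (fun i => (n:ℝ) * φ i) := by
    rw [hD, ← Matrix.diagonal_smul]
    congr 1
  have hDinv : D⁻¹ = Matrix.diagonal (fun i => ((n:ℝ) * φ i)⁻¹) := by
    rw [hDdiag]
    refine Matrix.inv_eq_left_inv ?_
    rw [Matrix.diagonal_mul_diagonal]
    have hf : (fun i => ((n:ℝ) * φ i)⁻¹ * ((n:ℝ) * φ i)) = fun _ => (1:ℝ) :=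
      funext fun i => inv_mul_cancel₀ (hnφ i)
    rw [hf, Matrix.diagonal_one]
  -- key identity
  have hstar : ∀ t, z (t + 1) = Abar * z t - α • gradMat g (x t) - y t := by
    intro t
    induction t with
    | zero =>
      rw [hz1, hy 0, Finset.sum_range_one, Matrix.sub_mul, hAbarM]
      module
    | succ t ih =>
      have ih' : Abar * z t = z (t + 1) + α • gradMat g (x t) + y t := by
        rw [ih]; abel
      have hy' : y (t + 1) = y t + (Abar - A) * z (t + 1) := by
        rw [hy (t+1), hy t, Finset.sum_range_succ]
      rw [hrec t, hy', ih', Matrix.sub_mul, hAbarM (z (t+1)), Matrix.add_mul, Matrix.one_mul]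
      module
  -- multiplication limit helper
  have hmul : ∀ (M : Matrix (Fin n) (Fin n) ℝ) (u : ℕ → Matrix (Fin n) (Fin p) ℝ)
      (U : Matrix (Fin n) (Fin p) ℝ),
      (∀ i j, Tendsto (fun k => u k i j) atTop (𝓝 (U i j))) →
      ∀ i j, Tendsto (fun k => (M * u k) i j) atTop (𝓝 ((M * U) i j)) := by
    intro M u U hu i j
    simp only [Matrix.mul_apply]
    exact tendsto_finset_sum _ fun l _ => (hu l j).const_mul (M i l)
  -- (Abar - A) * zs = 0, hence A zs = zs
  have hAAz : ∀ i j, ((Abar - A) * zs) i j = 0 := by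
    intro i j
    have h1 : Tendsto (fun k => ((Abar - A) * z (tj k + 1)) i j) atTop
        (𝓝 (((Abar - A) * zs) i j)) := hmul (Abar - A) (fun k => z (tj k + 1)) zs hzlim1 i j
    have h2 : Tendsto (fun k => ((Abar - A) * z (tj k + 1)) i j) atTop (𝓝 0) := by
      have key : ∀ k, ((Abar - A) * z (tj k + 1)) i j = y (tj k + 1) i j - y (tj k) i j := by
        intro k
        have : y (tj k + 1) = y (tj k) + (Abar - A) * z (tj k + 1) := by
          rw [hy (tj k + 1), hy (tj k), Finset.sum_range_succ]
        rw [this]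
        simp
      simp only [key]
      simpa using (hylim1 i j).sub (hylim i j)
    exact tendsto_nhds_unique h1 h2
  have hAz : A * zs = zs := by
    ext i j
    have h := hAAz i j
    rw [Matrix.sub_mul, hAbarM] at h
    simp only [Matrix.sub_apply, Matrix.smul_apply, Matrix.add_apply, smul_eq_mul] at h
    linarith
  have hAbarz : Abar * zs = zs := by
    rw [hAbarM, hAz, smul_add]
    module
  -- column sums of y are zero
  have hcolA : ∀ l, ∑ i, (Abar - A) i l = 0 := by
    intro l
    have h1 : ∑ i, (1 : Matrix (Fin n) (Fin n) ℝ) i l = 1 := by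
      simp [Matrix.one_apply]
    simp only [Matrix.sub_apply, hAbar, Matrix.smul_apply, Matrix.add_apply, smul_eq_mul]
    rw [Finset.sum_sub_distrib, ← Finset.mul_sum, Finset.sum_add_distrib, h1, hA1 l]
    norm_num
  have hycol : ∀ t j, ∑ i, y t i j = 0 := by
    intro t j
    rw [hy t]
    have : ∀ i, (∑ k ∈ Finset.range (t + 1), (Abar - A) * z k) i j
        = ∑ k ∈ Finset.range (t + 1), ((Abar - A) * z k) i j := by
      intro i
      simp [Matrix.sum_apply]
    simp only [this]
    rw [Finset.sum_comm]
    refine Finset.sum_eq_zero fun k _ => ?_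
    simp only [Matrix.mul_apply]
    rw [Finset.sum_comm]
    refine Finset.sum_eq_zero fun l _ => ?_
    rw [← Finset.sum_mul, hcolA l, zero_mul]
  have hyscol : ∀ j, ∑ i, ys i j = 0 := by
    intro j
    have h1 : Tendsto (fun k => ∑ i, y (tj k) i j) atTop (𝓝 (∑ i, ys i j)) :=
      tendsto_finset_sum _ fun i _ => hylim i j
    have h2 : Tendsto (fun k => ∑ i, y (tj k) i j) atTop (𝓝 0) := by
      simp only [hycol]; exact tendsto_const_nhds
    exact tendsto_nhds_unique h1 h2
  -- limit of x along the subsequence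
  have hxlim : ∀ i j, Tendsto (fun k => x (tj k) i j) atTop (𝓝 ((D⁻¹ * zs) i j)) := by
    intro i j
    have hwl : Tendsto (fun k => w (tj k) i) atTop (𝓝 ((n:ℝ) * φ i)) :=
      (hwlim i).comp htj.tendsto_atTop
    have h1 : Tendsto (fun k => (w (tj k) i)⁻¹ * z (tj k) i j) atTop
        (𝓝 (((n:ℝ) * φ i)⁻¹ * zs i j)) := (hwl.inv₀ (hnφ i)).mul (hzlim i j)
    have h2 : (D⁻¹ * zs) i j = ((n:ℝ) * φ i)⁻¹ * zs i j := by
      rw [hDinv, Matrix.diagonal_mul]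
    rw [h2]
    simpa only [hxe] using h1
  -- limit of the gradients
  have hglim : ∀ i j, Tendsto (fun k => gradMat g (x (tj k)) i j) atTop
      (𝓝 (gradMat g (D⁻¹ * zs) i j)) := by
    intro i j
    have hrow : Tendsto (fun k => ((WithLp.equiv 2 (Fin p → ℝ)).symm (x (tj k) i)))
        atTop (𝓝 ((WithLp.equiv 2 (Fin p → ℝ)).symm ((D⁻¹ * zs) i))) := by
      refine ((PiLp.continuous_toLp 2 (fun _ : Fin p => ℝ)).tendsto _).comp ?_
      exact tendsto_pi_nhds.mpr fun j' => hxlim i j'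
    have hval : Tendsto (fun k => g i ((WithLp.equiv 2 (Fin p → ℝ)).symm (x (tj k) i)))
        atTop (𝓝 (g i ((WithLp.equiv 2 (Fin p → ℝ)).symm ((D⁻¹ * zs) i)))) :=
      ((hgcont i).tendsto _).comp hrow
    have hcoord := ((PiLp.continuous_ofLp 2 (fun _ : Fin p => ℝ)).tendsto _).comp hval
    have := (tendsto_pi_nhds.mp hcoord) j
    simpa [gradMat] using this
  -- the limit identity
  have hmain : zs = Abar * zs - α • gradMat g (D⁻¹ * zs) - ys := by
    ext i j
    have h1 : Tendsto (fun k => z (tj k + 1) i j) atTop (𝓝 (zs i j)) := hzlim1 i j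
    have h2 : Tendsto (fun k => z (tj k + 1) i j) atTop
        (𝓝 ((Abar * zs) i j - α * gradMat g (D⁻¹ * zs) i j - ys i j)) := by
      have key : ∀ k, z (tj k + 1) i j
          = (Abar * z (tj k)) i j - α * gradMat g (x (tj k)) i j - y (tj k) i j := by
        intro k
        rw [hstar (tj k)]
        simp
      simp only [key]
      exact ((hmul Abar (fun k => z (tj k)) zs hzlim i j).sub ((hglim i j).const_mul α)).sub (hylim i j)
    have := tendsto_nhds_unique h1 h2
    simpa [Matrix.sub_apply, Matrix.smul_apply] using this
  refine ⟨hAz, hyscol, ?_, rfl⟩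
  rw [hAbarz, sub_sub] at hmain
  have h2 := sub_eq_self.mp hmain.symm
  rw [add_comm] at h2
  exact h2
end

section
/- Consider the Normalized ExtraPush iteration: x^t = D^{-1} z^t for all t ≥ 0; z^1 = A z^0 − α ∇f(x^0); and z^t = (A + I_n) z^{t−1} − Ā z^{t−2} − α(∇f(x^{t−1}) − ∇f(x^{t−2})) for t ≥ 2, where α > 0 and z^0 ∈ ℝ^{n×p} is arbitrary. Define y^t := Σ_{k=0}^t (Ā − A) z^k. Suppose there exist z*, y* ∈ ℝ^{n×p} and a strictly increasing sequence of indices (t_j) such that z^{t_j} → z*, z^{t_j+1} → z*, y^{t_j} → y*, and y^{t_j+1} → y* as j → ∞. Then, setting x* := D^{-1} z*, the triple (z*, y*, x*) satisfies the first-order optimality conditions: A z* = z*, 1_n^T y* = 0, y* + α ∇f(x*) = 0, and x* = D^{-1} z*. -/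
open Matrix Filter Topology

/-- any limit point `(z*, y*)` (along a subsequence, together with its
shift by one) of the Normalized ExtraPush iteration satisfies, with `x* := D⁻¹ z*`,
the first-order optimality conditions `A z* = z*`, `1ₙᵀ y* = 0`,
`y* + α ∇f(x*) = 0`, `x* = D⁻¹ z*`. -/
theorem normalizedExtraPush_limit_point_optimality
    {n p : ℕ} (hn : 1 ≤ n) (hp : 1 ≤ p)
    (A : Matrix (Fin n) (Fin n) ℝ)
    (hA0 : ∀ i j, 0 ≤ A i j) (hA1 : ∀ j, ∑ i, A i j = 1)
    (Abar : Matrix (Fin n) (Fin n) ℝ) (hAbar : Abar = (2⁻¹ : ℝ) • (1 + A))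
    (φ : Fin n → ℝ) (hφpos : ∀ i, 0 < φ i) (hφ1 : ∑ i, φ i = 1)
    (hconv : ∀ i j, Tendsto (fun t : ℕ => (A ^ t) i j) atTop (𝓝 (φ i)))
    (D : Matrix (Fin n) (Fin n) ℝ) (hD : D = (n : ℝ) • Matrix.diagonal φ)
    (f : Fin n → EuclideanSpace ℝ (Fin p) → ℝ)
    (g : Fin n → EuclideanSpace ℝ (Fin p) → EuclideanSpace ℝ (Fin p))
    (hconvex : ∀ i, ConvexOn ℝ Set.univ (f i))
    (hgrad : ∀ i y, HasGradientAt (f i) (g i y) y)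
    (hgcont : ∀ i, Continuous (g i))
    (α : ℝ) (hα : 0 < α)
    (z x : ℕ → Matrix (Fin n) (Fin p) ℝ)
    (hx : ∀ t, x t = D⁻¹ * z t)
    (hz1 : z 1 = A * z 0 - α • gradMat g (x 0))
    (hrec : ∀ t, z (t + 2) =
      (A + 1) * z (t + 1) - Abar * z t - α • (gradMat g (x (t + 1)) - gradMat g (x t)))
    (y : ℕ → Matrix (Fin n) (Fin p) ℝ)
    (hy : ∀ t, y t = ∑ k ∈ Finset.range (t + 1), (Abar - A) * z k)
    (zs ys : Matrix (Fin n) (Fin p) ℝ)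
    (tj : ℕ → ℕ) (htj : StrictMono tj)
    (hzlim : ∀ i j, Tendsto (fun k => z (tj k) i j) atTop (𝓝 (zs i j)))
    (hzlim1 : ∀ i j, Tendsto (fun k => z (tj k + 1) i j) atTop (𝓝 (zs i j)))
    (hylim : ∀ i j, Tendsto (fun k => y (tj k) i j) atTop (𝓝 (ys i j)))
    (hylim1 : ∀ i j, Tendsto (fun k => y (tj k + 1) i j) atTop (𝓝 (ys i j))) :
    A * zs = zs ∧
    (∀ j, ∑ i, ys i j = 0) ∧
    ys + α • gradMat g (D⁻¹ * zs) = 0 ∧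
    D⁻¹ * zs = D⁻¹ * zs := by
  -- Key recursion: z (t+1) = Abar * z t - y t - α • ∇f(x t)
  have key : ∀ t, z (t + 1) = Abar * z t - y t - α • gradMat g (x t) := by
    intro t
    induction t with
    | zero =>
      have hy0 : y 0 = (Abar - A) * z 0 := by simp [hy]
      rw [hz1, hy0, Matrix.sub_mul]
      abel
    | succ t ih =>
      have hAz : Abar * z t = z (t + 1) + y t + α • gradMat g (x t) := by
        rw [ih]; abel
      have hyt : y (t + 1) = y t + (Abar - A) * z (t + 1) := by
        rw [hy, hy, Finset.sum_range_succ]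
      rw [hrec t, hAz, hyt, Matrix.add_mul, Matrix.one_mul, Matrix.sub_mul, smul_sub]
      abel
  -- (Abar - A) * zs = 0
  have hdiff : (Abar - A) * zs = 0 := by
    ext i j
    have h1 : Tendsto (fun k => ((Abar - A) * z (tj k + 1)) i j) atTop
        (𝓝 (((Abar - A) * zs) i j)) := by
      simp only [Matrix.mul_apply]
      exact tendsto_finset_sum _ fun m _ => (hzlim1 m j).const_mul _
    have h2 : Tendsto (fun k => ((Abar - A) * z (tj k + 1)) i j) atTop (𝓝 0) := by
      have heq : ∀ k, ((Abar - A) * z (tj k + 1)) i j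
          = y (tj k + 1) i j - y (tj k) i j := by
        intro k
        rw [hy (tj k + 1), hy (tj k), Finset.sum_range_succ]
        simp [Matrix.add_apply]
      simp only [heq]
      simpa using (hylim1 i j).sub (hylim i j)
    have := tendsto_nhds_unique h1 h2
    simpa using this
  -- A zs = zs
  have hAzs : A * zs = zs := by
    have hsub : Abar - A = (2⁻¹ : ℝ) • (1 - A) := by
      rw [hAbar]
      ext i j
      simp [Matrix.sub_apply, Matrix.add_apply, Matrix.smul_apply, smul_eq_mul]
      ring
    rw [hsub] at hdiff
    rw [Matrix.smul_mul, smul_eq_zero] at hdiff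
    rcases hdiff with h | h
    · norm_num at h
    · rw [Matrix.sub_mul, Matrix.one_mul, sub_eq_zero] at h
      exact h.symm
  -- column sums of Abar are 1
  have hcolAbar : ∀ m, ∑ i, Abar i m = 1 := by
    intro m
    rw [hAbar]
    simp only [Matrix.smul_apply, Matrix.add_apply, smul_eq_mul]
    rw [← Finset.mul_sum, Finset.sum_add_distrib, hA1 m]
    simp [Matrix.one_apply]
    norm_num
  -- column sums of y t are 0
  have hycol : ∀ t j0, ∑ i, y t i j0 = 0 := by
    intro t j0
    simp only [hy, Matrix.sum_apply, Matrix.mul_apply, Matrix.sub_apply]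
    rw [Finset.sum_comm]
    refine Finset.sum_eq_zero fun k _ => ?_
    rw [Finset.sum_comm]
    refine Finset.sum_eq_zero fun m _ => ?_
    rw [← Finset.sum_mul]
    have hz0 : ∑ i, (Abar i m - A i m) = 0 := by
      rw [Finset.sum_sub_distrib, hcolAbar m, hA1 m, sub_self]
    rw [hz0, zero_mul]
  have hyscol : ∀ j0, ∑ i, ys i j0 = 0 := by
    intro j0
    have h1 : Tendsto (fun k => ∑ i, y (tj k) i j0) atTop (𝓝 (∑ i, ys i j0)) :=
      tendsto_finset_sum _ fun i _ => hylim i j0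
    have h2 : (fun k => ∑ i, y (tj k) i j0) = fun _ => (0 : ℝ) :=
      funext fun k => hycol _ j0
    rw [h2] at h1
    exact tendsto_nhds_unique h1 tendsto_const_nhds
  -- continuity of gradient entries
  have hGcont : ∀ i j0, Continuous fun v : Fin p → ℝ =>
      g i ((WithLp.equiv 2 (Fin p → ℝ)).symm v) j0 := by
    intro i j0
    have h1 : Continuous ((WithLp.equiv 2 (Fin p → ℝ)).symm) :=
      PiLp.continuous_toLp 2 fun _ => ℝ
    have h2 : Continuous fun w : EuclideanSpace ℝ (Fin p) => w j0 :=
      (continuous_apply j0).comp (PiLp.continuous_ofLp 2 fun _ => ℝ)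
    exact h2.comp ((hgcont i).comp h1)
  have hxlim : ∀ i m, Tendsto (fun k => x (tj k) i m) atTop (𝓝 ((D⁻¹ * zs) i m)) := by
    intro i m
    simp only [hx, Matrix.mul_apply]
    exact tendsto_finset_sum _ fun l _ => (hzlim l m).const_mul _
  have hrowlim : ∀ i, Tendsto (fun k => x (tj k) i) atTop (𝓝 ((D⁻¹ * zs) i)) := by
    intro i
    rw [tendsto_pi_nhds]
    exact fun m => hxlim i m
  have hGlim : ∀ i j0, Tendsto (fun k => gradMat g (x (tj k)) i j0) atTop
      (𝓝 (gradMat g (D⁻¹ * zs) i j0)) := by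
    intro i j0
    exact (((hGcont i j0).tendsto _)).comp (hrowlim i)
  -- entrywise limit identity
  have hent : ∀ i j0, zs i j0 = (Abar * zs) i j0 - ys i j0
      - α * gradMat g (D⁻¹ * zs) i j0 := by
    intro i j0
    have hL : Tendsto (fun k => z (tj k + 1) i j0) atTop (𝓝 (zs i j0)) := hzlim1 i j0
    have hR : Tendsto (fun k => (Abar * z (tj k)) i j0 - y (tj k) i j0
        - α * gradMat g (x (tj k)) i j0) atTop
        (𝓝 ((Abar * zs) i j0 - ys i j0 - α * gradMat g (D⁻¹ * zs) i j0)) := by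
      refine Tendsto.sub (Tendsto.sub ?_ (hylim i j0)) ((hGlim i j0).const_mul α)
      simp only [Matrix.mul_apply]
      exact tendsto_finset_sum _ fun m _ => (hzlim m j0).const_mul _
    have heq : (fun k => z (tj k + 1) i j0) = fun k => (Abar * z (tj k)) i j0
        - y (tj k) i j0 - α * gradMat g (x (tj k)) i j0 := by
      funext k
      rw [key (tj k)]
      simp [Matrix.sub_apply, Matrix.smul_apply, smul_eq_mul]
    rw [heq] at hL
    exact tendsto_nhds_unique hL hR
  have hAbarzs : Abar * zs = zs := by
    rw [hAbar, Matrix.smul_mul, Matrix.add_mul, Matrix.one_mul, hAzs]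
    ext i j0
    simp only [Matrix.smul_apply, Matrix.add_apply, smul_eq_mul]
    ring
  refine ⟨hAzs, hyscol, ?_, rfl⟩
  ext i j0
  have h := hent i j0
  rw [hAbarzs] at h
  simp only [Matrix.add_apply, Matrix.smul_apply, smul_eq_mul, Matrix.zero_apply]
  linarith
end

section
/- Let (z*, y*, x*) be n×p real matrices satisfying A z* = z*, 1_n^T y* = 0, y* + α ∇f(x*) = 0, and x* = D^{-1} z*, for some α > 0, and let u* ∈ ℝ^{n×p} satisfy (Ā − A) u* = y*. Set M := D^{-1}(Ā − A). Then M u* + α D^{-1} ∇f(D^{-1} z*) = 0 and M^T z* = 0; equivalently, with v* := (z*; u*) ∈ ℝ^{2n×p} stacked vertically, S := [[0, M], [−M^T, 0]] ∈ ℝ^{2n×2n} in 2×2 block form, and ∇f̄(v*) := (D^{-1}∇f(D^{-1}z*); 0), one has S v* + α ∇f̄(v*) = 0. -/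
open Matrix Filter Topology

/-- Vertical stacking `(X; Y)` of two `n × p` matrices into a `2n × p` matrix. -/
def vstack {n p : ℕ} (X Y : Matrix (Fin n) (Fin p) ℝ) :
    Matrix (Fin n ⊕ Fin n) (Fin p) ℝ := Matrix.of (Sum.elim X Y)

theorem vstack_inl {n p : ℕ} (X Y : Matrix (Fin n) (Fin p) ℝ) (i : Fin n) (j : Fin p) :
    vstack X Y (Sum.inl i) j = X i j := rfl

theorem vstack_inr {n p : ℕ} (X Y : Matrix (Fin n) (Fin p) ℝ) (i : Fin n) (j : Fin p) :
    vstack X Y (Sum.inr i) j = Y i j := rfl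

/-- if `(z*, y*, x*)` satisfies the first-order optimality conditions and
`(Ā − A) u* = y*`, then with `M := D⁻¹(Ā − A)` one has `M u* + α D⁻¹ ∇f(D⁻¹ z*) = 0`
and `Mᵀ z* = 0`; equivalently, `S v* + α ∇f̄(v*) = 0` where `v* = (z*; u*)`,
`S = [[0, M], [−Mᵀ, 0]]` and `∇f̄(v*) = (D⁻¹ ∇f(D⁻¹ z*); 0)`. -/
theorem normalizedExtraPush_saddle_point_identity
    {n p : ℕ} (hn : 1 ≤ n) (hp : 1 ≤ p)
    (A : Matrix (Fin n) (Fin n) ℝ)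
    (hA0 : ∀ i j, 0 ≤ A i j) (hA1 : ∀ j, ∑ i, A i j = 1)
    (Abar : Matrix (Fin n) (Fin n) ℝ) (hAbar : Abar = (2⁻¹ : ℝ) • (1 + A))
    (φ : Fin n → ℝ) (hφpos : ∀ i, 0 < φ i) (hφ1 : ∑ i, φ i = 1)
    (hconv : ∀ i j, Tendsto (fun t : ℕ => (A ^ t) i j) atTop (𝓝 (φ i)))
    (D : Matrix (Fin n) (Fin n) ℝ) (hD : D = (n : ℝ) • Matrix.diagonal φ)
    (f : Fin n → EuclideanSpace ℝ (Fin p) → ℝ)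
    (g : Fin n → EuclideanSpace ℝ (Fin p) → EuclideanSpace ℝ (Fin p))
    (hconvex : ∀ i, ConvexOn ℝ Set.univ (f i))
    (hgrad : ∀ i y, HasGradientAt (f i) (g i y) y)
    (α : ℝ) (hα : 0 < α)
    (zs ys xs us : Matrix (Fin n) (Fin p) ℝ)
    (hz : A * zs = zs)
    (hy : ∀ j, ∑ i, ys i j = 0)
    (hopt : ys + α • gradMat g xs = 0)
    (hx : xs = D⁻¹ * zs)
    (hu : (Abar - A) * us = ys)
    (M : Matrix (Fin n) (Fin n) ℝ) (hM : M = D⁻¹ * (Abar - A))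
    (S : Matrix (Fin n ⊕ Fin n) (Fin n ⊕ Fin n) ℝ)
    (hS : S = Matrix.fromBlocks 0 M (-Mᵀ) 0) :
    M * us + α • (D⁻¹ * gradMat g (D⁻¹ * zs)) = 0 ∧
    Mᵀ * zs = 0 ∧
    S * vstack zs us + α • vstack (D⁻¹ * gradMat g (D⁻¹ * zs)) 0 = 0 := by

  -- D⁻¹ is explicitly n⁻¹ • diagonal φ⁻¹
  have hφne : ∀ i, φ i ≠ 0 := fun i => (hφpos i).ne'
  have hnne : (n : ℝ) ≠ 0 := by positivity
  set E : Matrix (Fin n) (Fin n) ℝ :=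
    (n : ℝ)⁻¹ • Matrix.diagonal (fun i => (φ i)⁻¹) with hE
  have hDE : D * E = 1 := by
    rw [hD, hE, Matrix.smul_mul, Matrix.mul_smul, Matrix.diagonal_mul_diagonal,
      smul_smul, mul_inv_cancel₀ hnne]
    have : (fun i => φ i * (φ i)⁻¹) = fun _ => (1 : ℝ) := by
      funext i; exact mul_inv_cancel₀ (hφne i)
    rw [this, Matrix.diagonal_one, one_smul]
  have hDinv : D⁻¹ = E := Matrix.inv_eq_right_inv hDE
  -- zs has rows proportional to φ
  have hpow : ∀ t : ℕ, A ^ t * zs = zs := by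
    intro t
    induction t with
    | zero => simp
    | succ t ih => rw [pow_succ, Matrix.mul_assoc, hz, ih]
  have hzrow : ∀ i j, zs i j = φ i * ∑ k, zs k j := by
    intro i j
    have h1 : Tendsto (fun t : ℕ => (A ^ t * zs) i j) atTop
        (𝓝 (∑ k, φ i * zs k j)) := by
      simp only [Matrix.mul_apply]
      exact tendsto_finset_sum _ fun k _ => (hconv i k).mul tendsto_const_nhds
    have h2 : (fun t : ℕ => (A ^ t * zs) i j) = fun _ => zs i j := by
      funext t; rw [hpow t]
    rw [h2] at h1
    have := tendsto_nhds_unique tendsto_const_nhds h1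
    rw [this, Finset.mul_sum]
  -- D⁻¹ * zs has constant columns
  have hw : ∀ i j, (D⁻¹ * zs) i j = (∑ k, zs k j) / n := by
    intro i j
    rw [hDinv, hE, Matrix.smul_mul, Matrix.smul_apply, Matrix.diagonal_mul,
      smul_eq_mul, hzrow i j]
    field_simp [hφne i, hnne]
  -- second identity
  have h2 : Mᵀ * zs = 0 := by
    ext i j
    rw [hM, Matrix.transpose_mul, Matrix.mul_assoc]
    have hDt : (D⁻¹)ᵀ = D⁻¹ := by
      rw [hDinv, hE, Matrix.transpose_smul, Matrix.diagonal_transpose]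
    rw [hDt, Matrix.mul_apply]
    have : ∀ k, (Abar - A)ᵀ i k * (D⁻¹ * zs) k j
        = (Abar - A) k i * ((∑ m, zs m j) / n) := by
      intro k; rw [Matrix.transpose_apply, hw]
    rw [Finset.sum_congr rfl fun k _ => this k, ← Finset.sum_mul]
    have hsum : (∑ k, (Abar - A) k i) = 0 := by
      simp only [hAbar, Matrix.sub_apply, Matrix.smul_apply, Matrix.add_apply,
        Matrix.one_apply, smul_eq_mul]
      rw [Finset.sum_sub_distrib, ← Finset.mul_sum, Finset.sum_add_distrib, hA1 i]
      simp
      norm_num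
    rw [hsum, zero_mul, Matrix.zero_apply]
  -- first identity
  have h1 : M * us + α • (D⁻¹ * gradMat g (D⁻¹ * zs)) = 0 := by
    rw [hM, Matrix.mul_assoc, hu, ← hx, ← Matrix.mul_smul, ← Matrix.mul_add, hopt,
      Matrix.mul_zero]
  refine ⟨h1, h2, ?_⟩
  -- block identity
  ext i j
  cases i with
  | inl i =>
    have := congrFun (congrFun h1 i) j
    simp only [Matrix.add_apply, Matrix.mul_apply, Matrix.smul_apply,
      Matrix.zero_apply, smul_eq_mul, hS, vstack_inl, vstack_inr, Matrix.of_apply,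
      Fintype.sum_sum_type, Sum.elim_inl, Sum.elim_inr,
      Matrix.fromBlocks_apply₁₁, Matrix.fromBlocks_apply₁₂] at this ⊢
    simpa using this
  | inr i =>
    have := congrFun (congrFun h2 i) j
    simp only [Matrix.mul_apply, Matrix.zero_apply] at this
    simp only [Matrix.add_apply, Matrix.mul_apply, Matrix.smul_apply,
      Matrix.zero_apply, smul_eq_mul, hS, vstack_inl, vstack_inr, Matrix.of_apply,
      Fintype.sum_sum_type, Sum.elim_inl, Sum.elim_inr,
      Matrix.fromBlocks_apply₂₁, Matrix.fromBlocks_apply₂₂,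
      Matrix.neg_apply, neg_mul, Finset.sum_neg_distrib]
    simpa using this
end

section
/- Let G ∈ ℝ^{2n×2n}, let M ∈ ℝ^{n×n}, and set S := [[0, M], [−M^T, 0]] ∈ ℝ^{2n×2n} in 2×2 block form (so S^T = −S). For v = (z; u) ∈ ℝ^{2n×p} (z, u ∈ ℝ^{n×p}), define ∇f̄(v) := (g(z); 0) where g : ℝ^{n×p} → ℝ^{n×p} satisfies, for constants μ̄ > 0, L̄ > 0 and a fixed z* ∈ ℝ^{n×p}: μ̄‖z* − z‖² ≤ ⟨g(z*) − g(z), z* − z⟩ for all z, and ‖g(z₁) − g(z₂)‖ ≤ L̄‖z₁ − z₂‖ for all z₁, z₂. Suppose v^t, v^{t+1} ∈ ℝ^{2n×p} satisfy G^T(v^{t+1} − v^t) = −S v^{t+1} − α ∇f̄(v^t) with α > 0, and v* = (z*; u*) satisfies S v* + α ∇f̄(v*) = 0. Then for every η > 0: ⟨v* − v^{t+1}, G^T(v^t − v^{t+1})⟩ ≤ −α μ̄ ‖z^{t+1} − z*‖² + (α η/2)‖z* − z^{t+1}‖² + (α L̄²/(2η))‖z^t − z^{t+1}‖², where z^t,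 z^{t+1} denote the top n×p blocks of v^t, v^{t+1}. -/
open Matrix

/-- Frobenius (trace) inner product of two real matrices. -/
noncomputable def frob {m q : Type*} [Fintype m] [Fintype q]
    (X Y : Matrix m q ℝ) : ℝ := ∑ i, ∑ j, X i j * Y i j

/-- Frobenius norm of a real matrix. -/
noncomputable def fnorm {m q : Type*} [Fintype m] [Fintype q]
    (X : Matrix m q ℝ) : ℝ := Real.sqrt (frob X X)

/-- Top `n × p` block of a `2n × p` matrix. -/
def topBlk {n p : ℕ} (v : Matrix (Fin n ⊕ Fin n) (Fin p) ℝ) :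
    Matrix (Fin n) (Fin p) ℝ := Matrix.of fun i j => v (Sum.inl i) j

section lemmas
variable {m q : Type*} [Fintype m] [Fintype q]

lemma frob_comm (X Y : Matrix m q ℝ) : frob X Y = frob Y X := by
  simp [frob, mul_comm]

lemma frob_sub_right (X Y Z : Matrix m q ℝ) : frob X (Y - Z) = frob X Y - frob X Z := by
  simp [frob, Matrix.sub_apply, mul_sub, Finset.sum_sub_distrib]

lemma frob_add_right (X Y Z : Matrix m q ℝ) : frob X (Y + Z) = frob X Y + frob X Z := by
  simp [frob, Matrix.add_apply, mul_add, Finset.sum_add_distrib]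

lemma frob_smul_right (c : ℝ) (X Y : Matrix m q ℝ) : frob X (c • Y) = c * frob X Y := by
  simp [frob, Matrix.smul_apply, Finset.mul_sum, mul_left_comm, smul_eq_mul]

lemma frob_neg_right (X Y : Matrix m q ℝ) : frob X (-Y) = -frob X Y := by
  simp [frob]

lemma frob_nonneg (X : Matrix m q ℝ) : 0 ≤ frob X X := by
  apply Finset.sum_nonneg; intro i _
  apply Finset.sum_nonneg; intro j _
  exact mul_self_nonneg _

lemma fnorm_sq (X : Matrix m q ℝ) : fnorm X ^ 2 = frob X X :=
  Real.sq_sqrt (frob_nonneg X)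

lemma fnorm_nonneg (X : Matrix m q ℝ) : 0 ≤ fnorm X :=
  Real.sqrt_nonneg _

lemma fnorm_sub_comm (X Y : Matrix m q ℝ) : fnorm (X - Y) = fnorm (Y - X) := by
  unfold fnorm frob
  congr 1
  refine Finset.sum_congr rfl fun i _ => Finset.sum_congr rfl fun j _ => ?_
  simp [Matrix.sub_apply]; ring

lemma frob_le_fnorm_mul_fnorm (X Y : Matrix m q ℝ) :
    frob X Y ≤ fnorm X * fnorm Y := by
  have h := Real.sum_mul_le_sqrt_mul_sqrt (Finset.univ : Finset (m × q))
    (fun ij => X ij.1 ij.2) (fun ij => Y ij.1 ij.2)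
  have e1 : frob X Y = ∑ ij : m × q, X ij.1 ij.2 * Y ij.1 ij.2 := by
    rw [frob, Fintype.sum_prod_type]
  have e2 : frob X X = ∑ ij : m × q, (X ij.1 ij.2) ^ 2 := by
    rw [frob, Fintype.sum_prod_type]; simp [sq]
  have e3 : frob Y Y = ∑ ij : m × q, (Y ij.1 ij.2) ^ 2 := by
    rw [frob, Fintype.sum_prod_type]; simp [sq]
  rw [e1, fnorm, fnorm, e2, e3]
  exact h

lemma frob_eq_trace (X Y : Matrix m q ℝ) [DecidableEq q] : frob X Y = (Xᵀ * Y).trace := by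
  rw [frob, Matrix.trace]
  rw [Finset.sum_comm]
  refine Finset.sum_congr rfl fun j _ => ?_
  simp [Matrix.mul_apply, Matrix.diag]

lemma frob_mul_left [DecidableEq m] [DecidableEq q] (A : Matrix m m ℝ) (X Y : Matrix m q ℝ) :
    frob X (A * Y) = frob (Aᵀ * X) Y := by
  rw [frob_eq_trace, frob_eq_trace, Matrix.transpose_mul, Matrix.transpose_transpose,
    Matrix.mul_assoc]

end lemmas

lemma frob_vstack_zero {n p : ℕ} (W : Matrix (Fin n ⊕ Fin n) (Fin p) ℝ)
    (X : Matrix (Fin n) (Fin p) ℝ) :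
    frob W (vstack X 0) = frob (topBlk W) X := by
  have h1 : ∀ a j, vstack X 0 (Sum.inl a) j = X a j := fun _ _ => rfl
  have h2 : ∀ a j, vstack X 0 (Sum.inr a) j = 0 := fun _ _ => rfl
  simp [frob, topBlk, Fintype.sum_sum_type, h1, h2]

/-- the bound on `⟨v* − v^{t+1}, Gᵀ(v^t − v^{t+1})⟩` coming from strong
monotonicity and Lipschitz continuity of `g`, the skew-symmetric block matrix `S`,
the iteration `Gᵀ(v^{t+1} − v^t) = −S v^{t+1} − α ∇f̄(v^t)`, and
`S v* + α ∇f̄(v*) = 0`. -/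
theorem normalizedExtraPush_skew_term_bound
    {n p : ℕ} (hn : 1 ≤ n) (hp : 1 ≤ p)
    (G : Matrix (Fin n ⊕ Fin n) (Fin n ⊕ Fin n) ℝ)
    (M : Matrix (Fin n) (Fin n) ℝ)
    (S : Matrix (Fin n ⊕ Fin n) (Fin n ⊕ Fin n) ℝ)
    (hS : S = Matrix.fromBlocks 0 M (-Mᵀ) 0)
    (g : Matrix (Fin n) (Fin p) ℝ → Matrix (Fin n) (Fin p) ℝ)
    (mubar Lbar : ℝ) (hmubar : 0 < mubar) (hLbar : 0 < Lbar)
    (zs : Matrix (Fin n) (Fin p) ℝ)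
    (hmono : ∀ z, mubar * fnorm (zs - z) ^ 2 ≤ frob (g zs - g z) (zs - z))
    (hlip : ∀ z1 z2, fnorm (g z1 - g z2) ≤ Lbar * fnorm (z1 - z2))
    (α : ℝ) (hα : 0 < α)
    (vt vt1 : Matrix (Fin n ⊕ Fin n) (Fin p) ℝ)
    (hit : Gᵀ * (vt1 - vt) = -(S * vt1) - α • vstack (g (topBlk vt)) 0)
    (us : Matrix (Fin n) (Fin p) ℝ)
    (vs : Matrix (Fin n ⊕ Fin n) (Fin p) ℝ) (hvs : vs = vstack zs us)
    (hopt : S * vs + α • vstack (g zs) 0 = 0) :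
    ∀ η : ℝ, 0 < η →
      frob (vs - vt1) (Gᵀ * (vt - vt1)) ≤
        -(α * mubar) * fnorm (topBlk vt1 - zs) ^ 2 +
        α * η / 2 * fnorm (zs - topBlk vt1) ^ 2 +
        α * Lbar ^ 2 / (2 * η) * fnorm (topBlk vt - topBlk vt1) ^ 2 := by
  intro η hη
  set z1 := topBlk vt1 with hz1
  set zt := topBlk vt with hzt
  set w := vs - vt1 with hwdef
  -- skew symmetry of S
  have hST : Sᵀ = -S := by
    subst hS
    simp [Matrix.fromBlocks_transpose, Matrix.fromBlocks_neg]
  -- frob w (S * w) = 0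
  have hskew : frob w (S * w) = 0 := by
    have h1 : frob w (S * w) = frob (Sᵀ * w) w := frob_mul_left S w w
    rw [hST, Matrix.neg_mul, frob_comm (-(S * w)) w, frob_neg_right] at h1
    linarith
  -- rearranged iteration
  have hw : Gᵀ * (vt - vt1) = S * vt1 + α • vstack (g zt) 0 := by
    have h1 : vt - vt1 = -(vt1 - vt) := (neg_sub _ _).symm
    rw [h1, Matrix.mul_neg, hit, neg_sub, sub_neg_eq_add, add_comm]
  have hSvs : S * vs = -(α • vstack (g zs) 0) := eq_neg_of_add_eq_zero_left hopt
  -- top block of w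
  have htop : topBlk w = zs - z1 := by
    funext i j
    have h1 : vstack zs us (Sum.inl i) j = zs i j := rfl
    simp [topBlk, hwdef, hvs, Matrix.sub_apply, hz1, h1]
  -- the main identity
  have hA : frob w (Gᵀ * (vt - vt1)) = α * frob (zs - z1) (g zt - g zs) := by
    have hv1 : S * vt1 = S * vs - S * w := by
      rw [hwdef, Matrix.mul_sub]; abel
    rw [hw, frob_add_right, hv1, frob_sub_right, hskew, hSvs, frob_neg_right,
      frob_smul_right, frob_smul_right, frob_vstack_zero, frob_vstack_zero, htop,
      frob_sub_right (zs - z1) (g zt) (g zs)]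
    ring
  rw [hA, fnorm_sub_comm z1 zs]
  set a := fnorm (zs - z1) with ha
  set b := fnorm (zt - z1) with hb
  have ha0 : 0 ≤ a := fnorm_nonneg _
  have hb0 : 0 ≤ b := fnorm_nonneg _
  have hterm2 : frob (zs - z1) (g z1 - g zs) ≤ -(mubar * a ^ 2) := by
    have h := hmono z1
    have e : frob (zs - z1) (g z1 - g zs) = -frob (g zs - g z1) (zs - z1) := by
      rw [show g z1 - g zs = -(g zs - g z1) from (neg_sub _ _).symm, frob_neg_right,
        frob_comm]
    rw [e]
    linarith
  have hterm1 : frob (zs - z1) (g zt - g z1) ≤ Lbar * a * b := by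
    have h1 := frob_le_fnorm_mul_fnorm (zs - z1) (g zt - g z1)
    have h2 := hlip zt z1
    have h3 := mul_le_mul_of_nonneg_left h2 ha0
    calc frob (zs - z1) (g zt - g z1) ≤ a * fnorm (g zt - g z1) := h1
      _ ≤ a * (Lbar * b) := h3
      _ = Lbar * a * b := by ring
  have key : frob (zs - z1) (g zt - g zs) ≤ -(mubar * a ^ 2) + Lbar * a * b := by
    rw [show g zt - g zs = (g zt - g z1) + (g z1 - g zs) from by abel, frob_add_right]
    linarith
  have young : Lbar * a * b ≤ η / 2 * a ^ 2 + Lbar ^ 2 / (2 * η) * b ^ 2 := by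
    rw [← sub_nonneg]
    have heq : η / 2 * a ^ 2 + Lbar ^ 2 / (2 * η) * b ^ 2 - Lbar * a * b
        = (η * a - Lbar * b) ^ 2 / (2 * η) := by
      field_simp; ring
    rw [heq]; positivity
  have step : α * frob (zs - z1) (g zt - g zs)
      ≤ α * (-(mubar * a ^ 2) + (η / 2 * a ^ 2 + Lbar ^ 2 / (2 * η) * b ^ 2)) :=
    mul_le_mul_of_nonneg_left (by linarith) hα.le
  calc α * frob (zs - z1) (g zt - g zs)
      ≤ α * (-(mubar * a ^ 2) + (η / 2 * a ^ 2 + Lbar ^ 2 / (2 * η) * b ^ 2)) := step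
    _ = -(α * mubar) * a ^ 2 + α * η / 2 * a ^ 2 + α * Lbar ^ 2 / (2 * η) * b ^ 2 := by
        ring
end

section
/- Let A ∈ ℝ^{n×n} be column stochastic with nonnegative entries, and let φ ∈ ℝ^n have strictly positive entries and satisfy A φ = φ. Set D := n·diag(φ) and M := D^{-1}(Ā − A) = (1/2)·D^{-1}(I_n − A). Then M + M^T is positive semidefinite. -/
open Matrix

/-- if `A` is column stochastic with nonnegative entries and `φ > 0`
satisfies `A φ = φ`, then with `D := n diag(φ)` and `M := D⁻¹(Ā − A) = ½ D⁻¹(I − A)`,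
the matrix `M + Mᵀ` is positive semidefinite. -/
theorem normalizedExtraPush_M_plus_Mt_posSemidef
    {n : ℕ} (hn : 1 ≤ n)
    (A : Matrix (Fin n) (Fin n) ℝ)
    (hA0 : ∀ i j, 0 ≤ A i j) (hA1 : ∀ j, ∑ i, A i j = 1)
    (φ : Fin n → ℝ) (hφpos : ∀ i, 0 < φ i)
    (hφ : A *ᵥ φ = φ)
    (D : Matrix (Fin n) (Fin n) ℝ) (hD : D = (n : ℝ) • Matrix.diagonal φ)
    (M : Matrix (Fin n) (Fin n) ℝ)
    (hM : M = (2⁻¹ : ℝ) • (D⁻¹ * (1 - A))) :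
    (M + Mᵀ).PosSemidef := by
  have hnpos : (0:ℝ) < n := by exact_mod_cast hn
  have hn0 : (n:ℝ) ≠ 0 := hnpos.ne'
  have hφne : ∀ i, φ i ≠ 0 := fun i => (hφpos i).ne'
  have hrow : ∀ i, ∑ j, A i j * φ j = φ i := by
    intro i
    have := congrFun hφ i
    simpa [Matrix.mulVec, dotProduct] using this
  set c : Fin n → ℝ := fun i => ((n:ℝ) * φ i)⁻¹ with hc
  have hcφ : ∀ i, c i * φ i = (n:ℝ)⁻¹ := by
    intro i
    show ((n:ℝ) * φ i)⁻¹ * φ i = (n:ℝ)⁻¹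
    rw [mul_inv, mul_assoc, inv_mul_cancel₀ (hφne i), mul_one]
  have hDinv : D⁻¹ = Matrix.diagonal c := by
    apply Matrix.inv_eq_right_inv
    rw [hD]
    ext i j
    by_cases h : i = j
    · subst h
      simp only [Matrix.smul_mul, Matrix.smul_apply, Matrix.diagonal_mul_diagonal,
        Matrix.diagonal_apply_eq, Matrix.one_apply_eq, Pi.mul_apply, smul_eq_mul]
      rw [mul_comm (φ i), hcφ i, mul_inv_cancel₀ hn0]
    · simp [Matrix.mul_apply, Matrix.diagonal, Matrix.one_apply, h]
  have hMij : ∀ i j, M i j = 2⁻¹ * (c i * ((if i = j then (1:ℝ) else 0) - A i j)) := by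
    intro i j
    rw [hM, hDinv]
    simp [Matrix.smul_apply, Matrix.mul_apply, Matrix.sub_apply, Matrix.one_apply,
      Matrix.diagonal, ite_mul, Finset.sum_ite_eq, mul_sub]
  rw [Matrix.posSemidef_iff_dotProduct_mulVec]
  constructor
  · rw [Matrix.IsHermitian]
    ext i j
    simp [Matrix.conjTranspose_apply, Matrix.add_apply, Matrix.transpose_apply, add_comm]
  · intro x
    set y : Fin n → ℝ := fun i => x i / φ i with hy
    have hx : ∀ i, x i = φ i * y i := by
      intro i
      show x i = φ i * (x i / φ i)
      rw [mul_comm, div_mul_cancel₀ (x i) (hφne i)]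
    have key : ∑ i, ∑ j, c i * A i j * (x i * x j) ≤ ∑ i, c i * x i ^ 2 := by
      calc ∑ i, ∑ j, c i * A i j * (x i * x j)
          = ∑ i, ∑ j, (n:ℝ)⁻¹ * (A i j * φ j) * (y i * y j) := by
            refine Finset.sum_congr rfl fun i _ => Finset.sum_congr rfl fun j _ => ?_
            rw [hx i, hx j, ← hcφ i]
            ring
        _ ≤ ∑ i, ∑ j, (n:ℝ)⁻¹ * (A i j * φ j) * (2⁻¹ * (y i ^ 2 + y j ^ 2)) := by
            refine Finset.sum_le_sum fun i _ => Finset.sum_le_sum fun j _ => ?_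
            have hco : 0 ≤ (n:ℝ)⁻¹ * (A i j * φ j) :=
              mul_nonneg (by positivity) (mul_nonneg (hA0 i j) (hφpos j).le)
            have h2 : y i * y j ≤ 2⁻¹ * (y i ^ 2 + y j ^ 2) := by nlinarith [sq_nonneg (y i - y j)]
            exact mul_le_mul_of_nonneg_left h2 hco
        _ = (n:ℝ)⁻¹ * 2⁻¹ * ((∑ i, ∑ j, A i j * φ j * y i ^ 2) +
              ∑ i, ∑ j, A i j * φ j * y j ^ 2) := by
            rw [mul_add, Finset.mul_sum, Finset.mul_sum, ← Finset.sum_add_distrib]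
            refine Finset.sum_congr rfl fun i _ => ?_
            rw [Finset.mul_sum, Finset.mul_sum, ← Finset.sum_add_distrib]
            refine Finset.sum_congr rfl fun j _ => ?_
            ring
        _ = (n:ℝ)⁻¹ * 2⁻¹ * ((∑ i, φ i * y i ^ 2) + ∑ i, φ i * y i ^ 2) := by
            congr 1
            congr 1
            · refine Finset.sum_congr rfl fun i _ => ?_
              rw [← Finset.sum_mul, hrow]
            · rw [Finset.sum_comm]
              refine Finset.sum_congr rfl fun j _ => ?_
              rw [← Finset.sum_mul, ← Finset.sum_mul, hA1, one_mul]
        _ = ∑ i, c i * x i ^ 2 := by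
            rw [mul_add, Finset.mul_sum, ← Finset.sum_add_distrib]
            refine Finset.sum_congr rfl fun i _ => ?_
            rw [hx i, ← hcφ i]
            ring
    have expand : dotProduct (star x) ((M + Mᵀ) *ᵥ x)
        = (∑ i, c i * x i ^ 2) - ∑ i, ∑ j, c i * A i j * (x i * x j) := by
      simp only [dotProduct, Matrix.mulVec, Matrix.add_apply, Matrix.transpose_apply,
        star_trivial, Pi.star_apply]
      calc ∑ i, x i * ∑ j, (M i j + M j i) * x j
          = (∑ i, ∑ j, M i j * (x i * x j)) + ∑ i, ∑ j, M j i * (x i * x j) := by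
            rw [← Finset.sum_add_distrib]
            refine Finset.sum_congr rfl fun i _ => ?_
            rw [Finset.mul_sum, ← Finset.sum_add_distrib]
            refine Finset.sum_congr rfl fun j _ => ?_
            ring
        _ = 2 * ∑ i, ∑ j, M i j * (x i * x j) := by
            rw [two_mul]
            congr 1
            rw [Finset.sum_comm]
            refine Finset.sum_congr rfl (fun j _ => Finset.sum_congr rfl fun i _ => ?_)
            ring
        _ = (∑ i, c i * x i ^ 2) - ∑ i, ∑ j, c i * A i j * (x i * x j) := by
            rw [Finset.mul_sum, ← Finset.sum_sub_distrib]
            refine Finset.sum_congr rfl fun i _ => ?_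
            rw [Finset.mul_sum]
            have hsplit : c i * x i ^ 2 = ∑ j, (if i = j then c i * x i ^ 2 else 0) := by
              simp
            rw [hsplit, ← Finset.sum_sub_distrib]
            refine Finset.sum_congr rfl fun j _ => ?_
            rw [hMij]
            by_cases h : i = j
            · subst h
              rw [if_pos rfl, if_pos rfl]
              ring
            · rw [if_neg h, if_neg h]
              ring
    rw [expand]
    linarith [key]
end

section
/- Suppose each f_i : ℝ^p → ℝ is differentiable and quasi-strongly convex at a fixed point x̄* ∈ ℝ^p with constant S_i > 0: S_i‖x̄* − y‖² ≤ ⟨∇f_i(x̄*) − ∇f_i(y), x̄* − y⟩ for all y ∈ ℝ^p; set S_f := min_i S_i. Let φ ∈ ℝ^n have strictly positive entries, D := n·diag(φ), x* := 1_n(x̄*)^T, and z* := D x*. Define g(z) := D^{-1}∇f(D^{-1}z) for z ∈ ℝ^{n×p}. Then for all z ∈ ℝ^{n×p}: μ̄‖z* − z‖² ≤ ⟨g(z*) − g(z), z* − z⟩, where μ̄ := S_f/σ_max(D)² and σ_max(D) := n·max_i φ_i is the largest singular value of D. -/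
open Matrix RealInnerProductSpace

/-- the map `g(z) := D⁻¹ ∇f(D⁻¹ z)` is quasi-strongly monotone at
`z* := D x*` with constant `μ̄ = S_f / σ_max(D)²`, where `σ_max(D) = n maxᵢ φᵢ`. -/
theorem normalizedExtraPush_normalized_gradient_strong_monotonicity
    {n p : ℕ} (hn : 1 ≤ n) (hp : 1 ≤ p)
    (f : Fin n → EuclideanSpace ℝ (Fin p) → ℝ)
    (g : Fin n → EuclideanSpace ℝ (Fin p) → EuclideanSpace ℝ (Fin p))
    (hgrad : ∀ i y, HasGradientAt (f i) (g i y) y)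
    (xbar : EuclideanSpace ℝ (Fin p))
    (S : Fin n → ℝ) (hSpos : ∀ i, 0 < S i)
    (hqsc : ∀ i y, S i * ‖xbar - y‖ ^ 2 ≤ ⟪g i xbar - g i y, xbar - y⟫)
    (Sf : ℝ) (hSf : IsLeast (Set.range S) Sf)
    (φ : Fin n → ℝ) (hφpos : ∀ i, 0 < φ i)
    (D : Matrix (Fin n) (Fin n) ℝ) (hD : D = (n : ℝ) • Matrix.diagonal φ)
    (φmax : ℝ) (hφmax : IsGreatest (Set.range φ) φmax)
    (σmaxD : ℝ) (hσmaxD : σmaxD = (n : ℝ) * φmax)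
    (mubar : ℝ) (hmubar : mubar = Sf / σmaxD ^ 2)
    (xs : Matrix (Fin n) (Fin p) ℝ) (hxs : ∀ i j, xs i j = xbar j)
    (zs : Matrix (Fin n) (Fin p) ℝ) (hzs : zs = D * xs) :
    ∀ z : Matrix (Fin n) (Fin p) ℝ,
      mubar * fnorm (zs - z) ^ 2 ≤
        frob (D⁻¹ * gradMat g (D⁻¹ * zs) - D⁻¹ * gradMat g (D⁻¹ * z)) (zs - z) := by
  intro z
  -- basic positivity facts
  set d : Fin n → ℝ := fun i => (n : ℝ) * φ i with hd_def
  have hnpos : (0 : ℝ) < n := by exact_mod_cast hn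
  have hdpos : ∀ i, 0 < d i := fun i => mul_pos hnpos (hφpos i)
  obtain ⟨⟨i0, hi0⟩, hSflb⟩ := hSf
  have hSfpos : 0 < Sf := hi0 ▸ hSpos i0
  obtain ⟨⟨i1, hi1⟩, hφub⟩ := hφmax
  have hφmaxpos : 0 < φmax := hi1 ▸ hφpos i1
  have hσpos : 0 < σmaxD := by rw [hσmaxD]; positivity
  -- diagonal structure
  have hDdiag : D = Matrix.diagonal d := by
    rw [hD, ← Matrix.diagonal_smul]
    congr 1
  have hDinv : D⁻¹ = Matrix.diagonal (fun i => (d i)⁻¹) := by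
    rw [hDdiag]
    apply Matrix.inv_eq_right_inv
    rw [Matrix.diagonal_mul_diagonal]
    convert Matrix.diagonal_one using 2
    funext i
    exact mul_inv_cancel₀ (hdpos i).ne'
  have hzs' : ∀ i j, zs i j = d i * xbar j := by
    intro i j
    rw [hzs, hDdiag, Matrix.diagonal_mul, hxs]
  -- the row vectors y i
  set y : Fin n → EuclideanSpace ℝ (Fin p) :=
    fun i => (WithLp.equiv 2 (Fin p → ℝ)).symm ((D⁻¹ * z) i) with hy_def
  have hyval : ∀ i j, y i j = (d i)⁻¹ * z i j := by
    intro i j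
    show (D⁻¹ * z) i j = _
    rw [hDinv, Matrix.diagonal_mul]
  have hzval : ∀ i j, z i j = d i * y i j := by
    intro i j
    rw [hyval, ← mul_assoc, mul_inv_cancel₀ (hdpos i).ne', one_mul]
  -- gradMat at zs
  have hgz : ∀ i j, gradMat g (D⁻¹ * zs) i j = g i xbar j := by
    intro i j
    show g i ((WithLp.equiv 2 (Fin p → ℝ)).symm ((D⁻¹ * zs) i)) j = _
    refine congrArg (fun v => g i v j) ?_
    have : (D⁻¹ * zs) i = (WithLp.equiv 2 (Fin p → ℝ)) xbar := by
      funext j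
      show (D⁻¹ * zs) i j = xbar j
      rw [hDinv, Matrix.diagonal_mul, hzs' i j, ← mul_assoc,
        inv_mul_cancel₀ (hdpos i).ne', one_mul]
    rw [this, Equiv.symm_apply_apply]
  have hgy : ∀ i j, gradMat g (D⁻¹ * z) i j = g i (y i) j := fun i j => rfl
  have hDmul : ∀ (M : Matrix (Fin n) (Fin p) ℝ) i j, (D⁻¹ * M) i j = (d i)⁻¹ * M i j := by
    intro M i j
    rw [hDinv, Matrix.diagonal_mul]
  -- rewrite RHS as a sum of inner products
  have hrhs : frob (D⁻¹ * gradMat g (D⁻¹ * zs) - D⁻¹ * gradMat g (D⁻¹ * z)) (zs - z)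
      = ∑ i, ⟪g i xbar - g i (y i), xbar - y i⟫ := by
    unfold frob
    refine Finset.sum_congr rfl fun i _ => ?_
    rw [PiLp.inner_apply]
    refine Finset.sum_congr rfl fun j _ => ?_
    have h1 : (D⁻¹ * gradMat g (D⁻¹ * zs) - D⁻¹ * gradMat g (D⁻¹ * z)) i j
        = (d i)⁻¹ * (g i xbar j - g i (y i) j) := by
      rw [Matrix.sub_apply, hDmul, hDmul, hgz, hgy, mul_sub]
    have h2 : (zs - z) i j = d i * (xbar j - y i j) := by
      rw [Matrix.sub_apply, hzs' i j, hzval i j, mul_sub]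
    rw [h1, h2, RCLike.inner_apply, conj_trivial]
    have hsub1 : (g i xbar - g i (y i)) j = g i xbar j - g i (y i) j := rfl
    have hsub2 : (xbar - y i) j = xbar j - y i j := rfl
    rw [hsub1, hsub2]
    have hne := (hdpos i).ne'
    rw [show (d i)⁻¹ * (g i xbar j - g i (y i) j) * (d i * (xbar j - y i j))
        = ((d i)⁻¹ * d i) * ((g i xbar j - g i (y i) j) * (xbar j - y i j)) from by ring,
      inv_mul_cancel₀ hne, one_mul]
    ring
  -- rewrite LHS as a sum of squared norms
  have hfrobnn : 0 ≤ frob (zs - z) (zs - z) := by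
    unfold frob
    exact Finset.sum_nonneg fun i _ => Finset.sum_nonneg fun j _ => mul_self_nonneg _
  have hlhs : fnorm (zs - z) ^ 2 = ∑ i, d i ^ 2 * ‖xbar - y i‖ ^ 2 := by
    unfold fnorm
    rw [Real.sq_sqrt hfrobnn]
    unfold frob
    refine Finset.sum_congr rfl fun i _ => ?_
    have hnorm : ‖xbar - y i‖ ^ 2 = ∑ j, (xbar j - y i j) * (xbar j - y i j) := by
      rw [← real_inner_self_eq_norm_sq, PiLp.inner_apply]
      refine Finset.sum_congr rfl fun j _ => ?_
      rw [RCLike.inner_apply, conj_trivial]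
      rfl
    rw [hnorm, Finset.mul_sum]
    refine Finset.sum_congr rfl fun j _ => ?_
    have h2 : (zs - z) i j = d i * (xbar j - y i j) := by
      rw [Matrix.sub_apply, hzs' i j, hzval i j, mul_sub]
    rw [h2]; ring
  rw [hrhs, hlhs, Finset.mul_sum]
  refine Finset.sum_le_sum fun i _ => ?_
  have hcoef : mubar * d i ^ 2 ≤ S i := by
    have hdle : d i ≤ σmaxD := by
      rw [hσmaxD]
      exact mul_le_mul_of_nonneg_left (hφub ⟨i, rfl⟩) hnpos.le
    have hsq : d i ^ 2 ≤ σmaxD ^ 2 := by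
      apply pow_le_pow_left₀ (hdpos i).le hdle
    have : mubar * d i ^ 2 ≤ mubar * σmaxD ^ 2 := by
      apply mul_le_mul_of_nonneg_left hsq
      rw [hmubar]; positivity
    refine this.trans ?_
    rw [hmubar, div_mul_cancel₀ _ (by positivity : σmaxD ^ 2 ≠ 0)]
    exact hSflb ⟨i, rfl⟩
  calc mubar * (d i ^ 2 * ‖xbar - y i‖ ^ 2)
      = (mubar * d i ^ 2) * ‖xbar - y i‖ ^ 2 := by ring
    _ ≤ S i * ‖xbar - y i‖ ^ 2 :=
        mul_le_mul_of_nonneg_right hcoef (by positivity)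
    _ ≤ ⟪g i xbar - g i (y i), xbar - y i⟫ := hqsc i (y i)
end
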